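/- Let R be a commutative ring. The map sending an ideal I of R to the subtractive closure ⟨u_R(I)⟩_k in fgId(R) of the ideal of fgId(R) generated by {R·a : a ∈ I}, and the map sending a subtractive ideal Λ of fgId(R) to u_R⁻¹(Λ) = {a ∈ R : R·a ∈ Λ}, are mutually inverse, inclusion-preserving bijections between the set Id(R) of ideals of R and the set Id_k(fgId(R)) of subtractive ideals of the semiring fgId(R). -/

import Mathlib

/-- The type of finitely generated ideals of a commutative ring `R`. -/
def FGIdeal (R : Type*) [CommRing R] : Type _ := {I : Ideal R // I.FG}

namespace FGIdeal

variable {R : Type*} [CommRing R]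

instance : Zero (FGIdeal R) := ⟨⟨⊥, Submodule.fg_bot⟩⟩

instance : One (FGIdeal R) := ⟨⟨1, ⟨{1}, by simp [Ideal.one_eq_top]⟩⟩⟩

instance : Add (FGIdeal R) :=
  ⟨fun I J => ⟨I.1 + J.1, by rw [Submodule.add_eq_sup]; exact Submodule.FG.sup I.2 J.2⟩⟩

instance : Mul (FGIdeal R) := ⟨fun I J => ⟨I.1 * J.1, Submodule.FG.mul I.2 J.2⟩⟩

instance : SMul ℕ (FGIdeal R) :=
  ⟨fun n I => ⟨n • I.1, by
    induction n with
    | zero => simpa using (show Ideal.FG (⊥ : Ideal R) from Submodule.fg_bot)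
    | succ n ih => rw [succ_nsmul, Submodule.add_eq_sup]; exact Submodule.FG.sup ih I.2⟩⟩

instance : Pow (FGIdeal R) ℕ := ⟨fun I n => ⟨I.1 ^ n, Submodule.FG.pow I.2 n⟩⟩

instance : NatCast (FGIdeal R) :=
  ⟨fun n => ⟨(n : Ideal R), by
    induction n with
    | zero => simpa using (show Ideal.FG (⊥ : Ideal R) from Submodule.fg_bot)
    | succ n ih =>
        rw [Nat.cast_succ, Submodule.add_eq_sup]
        exact Submodule.FG.sup ih ⟨{1}, by simp [Ideal.one_eq_top]⟩⟩⟩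

instance : CommSemiring (FGIdeal R) :=
  Subtype.val_injective.commSemiring (fun I : FGIdeal R => I.1) rfl rfl
    (fun _ _ => rfl) (fun _ _ => rfl) (fun _ _ => rfl) (fun _ _ => rfl) (fun _ => rfl)

end FGIdeal

variable {R : Type*} [CommRing R]

/-- The universal integral seminorm `u_R : R → fgId(R)`, `a ↦ R·a`. -/
def uRfg (a : R) : FGIdeal R := ⟨Ideal.span {a}, Submodule.fg_span_singleton a⟩
section SemiringIdeals

variable {S : Type*} [CommSemiring S]

/-- A subset of a commutative semiring which is an ideal: it contains `0` and is closed
under addition and under multiplication by arbitrary elements. -/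
def IsIdealSet (I : Set S) : Prop :=
  (0 : S) ∈ I ∧ (∀ a ∈ I, ∀ b ∈ I, a + b ∈ I) ∧ ∀ (c : S), ∀ a ∈ I, c * a ∈ I

/-- A subset `I` is subtractive if `a + b ∈ I` and `a ∈ I` imply `b ∈ I`. -/
def IsSubtractiveSet (I : Set S) : Prop :=
  ∀ a b : S, a + b ∈ I → a ∈ I → b ∈ I

/-- A `k`-ideal (subtractive ideal) of a commutative semiring. -/
def IsKIdeal (I : Set S) : Prop := IsIdealSet I ∧ IsSubtractiveSet I

/-- The smallest subtractive ideal containing a subset `X`. -/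
def kClosure (X : Set S) : Set S := ⋂₀ {J : Set S | IsKIdeal J ∧ X ⊆ J}

/-- The smallest ideal containing a subset `X`. -/
def idealGen (X : Set S) : Set S := ⋂₀ {J : Set S | IsIdealSet J ∧ X ⊆ J}

/-- An ideal of a commutative semiring is prime when its complement is multiplicatively
closed: `1 ∉ I` and `a * b ∈ I` implies `a ∈ I` or `b ∈ I`. -/
def IsPrimeSet (I : Set S) : Prop :=
  (1 : S) ∉ I ∧ ∀ a b : S, a * b ∈ I → a ∈ I ∨ b ∈ I

end SemiringIdeals

/-- The map `Id(R) → Id_k(fgId(R))`, `I ↦ ⟨u_R(I)⟩_k`. -/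
def uRtilde {R : Type*} [CommRing R] (I : Ideal R) : Set (FGIdeal R) :=
  kClosure (uRfg '' (I : Set R))

section Aux

variable {S : Type*} [CommSemiring S]

lemma isKIdeal_kClosure (X : Set S) : IsKIdeal (kClosure X) := by
  constructor
  · refine ⟨?_, ?_, ?_⟩
    · exact fun J hJ => hJ.1.1.1
    · intro a ha b hb J hJ; exact hJ.1.1.2.1 a (ha J hJ) b (hb J hJ)
    · intro c a ha J hJ; exact hJ.1.1.2.2 c a (ha J hJ)
  · intro a b hab ha J hJ; exact hJ.1.2 a b (hab J hJ) (ha J hJ)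

lemma subset_kClosure (X : Set S) : X ⊆ kClosure X :=
  fun a ha J hJ => hJ.2 ha

lemma kClosure_subset {X J : Set S} (h : IsKIdeal J) (hX : X ⊆ J) : kClosure X ⊆ J :=
  fun a ha => ha J ⟨h, hX⟩

variable {R : Type*} [CommRing R]

@[simp] lemma FGIdeal.val_add (I J : FGIdeal R) : (I + J).1 = I.1 + J.1 := rfl

@[simp] lemma FGIdeal.val_zero : ((0 : FGIdeal R)).1 = ⊥ := rfl

/-- A k-ideal of `FGIdeal R` is downward closed. -/
lemma mem_of_le_of_mem_kIdeal {Λ : Set (FGIdeal R)} (h : IsKIdeal Λ) {J K : FGIdeal R}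
    (hJK : J.1 ≤ K.1) (hK : K ∈ Λ) : J ∈ Λ := by
  have hsum : K + J = K := by
    apply Subtype.ext
    rw [FGIdeal.val_add, Submodule.add_eq_sup, sup_eq_left.mpr hJK]
  exact h.2 K J (by rw [hsum]; exact hK) hK

lemma span_finset_mem {Λ : Set (FGIdeal R)} (h : IsKIdeal Λ) (s : Finset R)
    (hs : ∀ a ∈ s, uRfg a ∈ Λ) (hfg : (Ideal.span (s : Set R)).FG) :
    (⟨Ideal.span (s : Set R), hfg⟩ : FGIdeal R) ∈ Λ := by
  classical
  induction s using Finset.induction_on with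
  | empty =>
      have : (⟨Ideal.span ((∅ : Finset R) : Set R), hfg⟩ : FGIdeal R) = (0 : FGIdeal R) :=
        Subtype.ext (by show Ideal.span _ = ⊥; simp)
      rw [this]; exact h.1.1
  | @insert a s ha ih =>
      have h1 : uRfg a ∈ Λ := hs a (Finset.mem_insert_self a s)
      have h2 : (⟨Ideal.span (s : Set R), ⟨s, rfl⟩⟩ : FGIdeal R) ∈ Λ :=
        ih (fun b hb => hs b (Finset.mem_insert_of_mem hb)) _
      have heq : (⟨Ideal.span ((insert a s : Finset R) : Set R), hfg⟩ : FGIdeal R)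
          = uRfg a + ⟨Ideal.span (s : Set R), ⟨s, rfl⟩⟩ := by
        apply Subtype.ext
        show Ideal.span ((insert a s : Finset R) : Set R) = Ideal.span {a} + Ideal.span (s : Set R)
        rw [Submodule.add_eq_sup]
        simp [uRfg, Ideal.span_insert]
      rw [heq]; exact h.1.2.1 _ h1 _ h2

/-- Key characterization of `uRtilde`. -/
lemma uRtilde_eq (I : Ideal R) : uRtilde I = {J : FGIdeal R | J.1 ≤ I} := by
  apply le_antisymm
  · apply kClosure_subset
    · constructor
      · refine ⟨?_, ?_, ?_⟩
        · exact (bot_le : (⊥ : Ideal R) ≤ I)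
        · intro a ha b hb
          rw [Set.mem_setOf_eq, FGIdeal.val_add, Submodule.add_eq_sup]
          exact sup_le ha hb
        · intro c a ha
          exact le_trans (Ideal.mul_le_right) ha
      · intro a b hab ha
        have : a.1 ⊔ b.1 ≤ I := by
          rw [← Submodule.add_eq_sup]; exact hab
        exact le_trans le_sup_right this
    · rintro _ ⟨a, ha, rfl⟩
      exact (Ideal.span_singleton_le_iff_mem I).mpr ha
  · intro J hJ
    obtain ⟨s, hs⟩ := J.2
    have hJeq : J = ⟨Ideal.span (s : Set R), ⟨s, rfl⟩⟩ := Subtype.ext hs.symm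
    rw [hJeq]
    apply span_finset_mem (isKIdeal_kClosure _)
    intro a ha
    apply subset_kClosure
    refine ⟨a, ?_, rfl⟩
    have : a ∈ Ideal.span (s : Set R) := Ideal.subset_span ha
    rw [hs] at this
    exact hJ this

/-- The ideal of `R` corresponding to a k-ideal of `FGIdeal R`. -/
def preIdeal (Λ : Set (FGIdeal R)) (h : IsKIdeal Λ) : Ideal R where
  carrier := uRfg ⁻¹' Λ
  zero_mem' := by
    have : uRfg (0 : R) = 0 := Subtype.ext (by simp [uRfg])
    simp only [Set.mem_preimage, this]
    exact h.1.1
  add_mem' := by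
    intro a b ha hb
    have hsum : uRfg a + uRfg b ∈ Λ := h.1.2.1 _ ha _ hb
    refine mem_of_le_of_mem_kIdeal h ?_ hsum
    rw [FGIdeal.val_add, Submodule.add_eq_sup]
    rw [uRfg, Ideal.span_singleton_le_iff_mem]
    exact add_mem (le_sup_left (α := Ideal R) (Ideal.mem_span_singleton_self a))
      (le_sup_right (α := Ideal R) (Ideal.mem_span_singleton_self b))
  smul_mem' := by
    intro c a ha
    refine mem_of_le_of_mem_kIdeal h ?_ ha
    show Ideal.span {c • a} ≤ Ideal.span {a}
    rw [smul_eq_mul, Ideal.span_singleton_le_span_singleton]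
    exact dvd_mul_left a c

end Aux

/-- `I ↦ ⟨u_R(I)⟩_k` and `Λ ↦ u_R⁻¹(Λ)` are mutually inverse,
inclusion-preserving bijections between the ideals of `R` and the subtractive ideals of
the semiring `fgId(R)`. -/
theorem correspondence_ideals_subtractive_ideals
    (R : Type*) [CommRing R] :
    (∀ I : Ideal R, IsKIdeal (uRtilde I)) ∧
    (∀ I : Ideal R, uRfg ⁻¹' (uRtilde I) = (I : Set R)) ∧
    (∀ Λ : Set (FGIdeal R), IsKIdeal Λ →
      ∃ I : Ideal R, (I : Set R) = uRfg ⁻¹' Λ ∧ uRtilde I = Λ) ∧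
    (∀ I J : Ideal R, I ≤ J → uRtilde I ⊆ uRtilde J) ∧
    (∀ Λ Λ' : Set (FGIdeal R), Λ ⊆ Λ' → (uRfg ⁻¹' Λ : Set R) ⊆ uRfg ⁻¹' Λ') := by
  refine ⟨?_, ?_, ?_, ?_, ?_⟩
  · intro I
    rw [uRtilde_eq]
    constructor
    · refine ⟨(bot_le : (⊥ : Ideal R) ≤ I), ?_, ?_⟩
      · intro a ha b hb
        rw [Set.mem_setOf_eq, FGIdeal.val_add, Submodule.add_eq_sup]
        exact sup_le ha hb
      · intro c a ha
        exact le_trans Ideal.mul_le_right ha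
    · intro a b hab ha
      have : a.1 ⊔ b.1 ≤ I := by rw [← Submodule.add_eq_sup]; exact hab
      exact le_trans le_sup_right this
  · intro I
    ext a
    simp only [Set.mem_preimage, uRtilde_eq, Set.mem_setOf_eq, SetLike.mem_coe]
    exact Ideal.span_singleton_le_iff_mem I
  · intro Λ hΛ
    refine ⟨preIdeal Λ hΛ, rfl, ?_⟩
    rw [uRtilde_eq]
    ext J
    simp only [Set.mem_setOf_eq]
    constructor
    · intro hJ
      obtain ⟨s, hs⟩ := J.2
      have hJeq : J = ⟨Ideal.span (s : Set R), ⟨s, rfl⟩⟩ := Subtype.ext hs.symm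
      rw [hJeq]
      apply span_finset_mem hΛ
      intro a ha
      have : a ∈ J.1 := by rw [← hs]; exact Ideal.subset_span ha
      exact hJ this
    · intro hJ a ha
      have : uRfg a ∈ Λ := by
        refine mem_of_le_of_mem_kIdeal hΛ ?_ hJ
        exact (Ideal.span_singleton_le_iff_mem J.1).mpr ha
      exact this
  · intro I J hIJ
    rw [uRtilde_eq, uRtilde_eq]
    exact fun K hK => le_trans hK hIJ
  · intro Λ Λ' h a ha
    exact h ha
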